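/- Let n = 2k and s with gcd(s, 2k) = 1. Define A(b) = b(b+1)^{2^s + 2^{-s}} / (b + b^{2^{-s}})^{2^s+1} for non-cube b ∈ F_{2^{2k}}, where x^{2^{-s}} denotes the inverse Frobenius. Then A(b) = A(b^{-1}) for every non-cube b. -/

import Mathlib

/-- With `A(b) = b(b+1)^{2^s+2^{-s}} / (b+b^{2^{-s}})^{2^s+1}`
(where `b'`, `c'` are the inverse Frobenius images of `b`, `b⁻¹` respectively,
i.e. the unique elements with `b'^{2^s} = b` and `c'^{2^s} = b⁻¹`),
one has `A(b) = A(b⁻¹)` for every non-cube `b`. -/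
theorem stmt7 (F : Type*) [Field F] [Fintype F] (k s : ℕ) (hk : 0 < k) (hs : 0 < s)
    (hcard : Fintype.card F = 2 ^ (2 * k)) (hgcd : Nat.gcd s (2 * k) = 1)
    (b : F) (hb : ¬ ∃ c : F, c ^ 3 = b)
    (b' c' : F) (hb' : b' ^ 2 ^ s = b) (hc' : c' ^ 2 ^ s = b⁻¹) :
    b * ((b + 1) ^ 2 ^ s * (b' + 1)) / (b + b') ^ (2 ^ s + 1) =
      b⁻¹ * ((b⁻¹ + 1) ^ 2 ^ s * (c' + 1)) / (b⁻¹ + c') ^ (2 ^ s + 1) := by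
  -- characteristic 2
  haveI hchar : CharP F 2 := by
    obtain ⟨p, hp⟩ := CharP.exists F
    obtain ⟨n, hpp, hcard'⟩ := FiniteField.card F p
    have : p = 2 := by
      have h2 : p ∣ 2 ^ (2 * k) := by
        rw [← hcard, hcard']; exact dvd_pow_self p n.pos.ne'
      exact (Nat.prime_dvd_prime_iff_eq hpp Nat.prime_two).mp (hpp.dvd_of_dvd_pow h2)
    rwa [this] at hp
  have hb1 : b ≠ 1 := fun h => hb ⟨1, by rw [h, one_pow]⟩
  have hb0 : b ≠ 0 := fun h => hb ⟨0, by rw [h]; ring⟩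
  have hepos : (2 : ℕ) ^ s ≠ 0 := (pow_pos two_pos s).ne'
  have hb'0 : b' ≠ 0 := fun h => hb0 (by rw [← hb', h, zero_pow hepos])
  have addcancel : ∀ x y : F, x + y = 0 → x = y := by
    intro x y h
    have := eq_neg_of_add_eq_zero_left h
    rwa [CharTwo.neg_eq] at this
  -- c' = b'⁻¹
  have hcb : c' = b'⁻¹ := by
    have h1 : (c' + b'⁻¹) ^ 2 ^ s = 0 := by
      rw [add_pow_char_pow, hc', inv_pow, hb']
      exact CharTwo.add_self_eq_zero _
    exact addcancel _ _ (pow_eq_zero_iff hepos |>.mp h1)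
  -- b + b' ≠ 0
  have hbb' : b + b' ≠ 0 := by
    intro h
    have hbe : b ^ 2 ^ s = b := by
      conv_lhs => rw [addcancel _ _ h]
      rw [hb']
    have hone : b ^ (2 ^ s - 1) = 1 := by
      have h2 : b ^ (2 ^ s - 1) * b = b := by
        rw [← pow_succ, Nat.sub_add_cancel Nat.one_le_two_pow, hbe]
      field_simp at h2
      exact h2
    have hd1 : orderOf b ∣ 2 ^ s - 1 := orderOf_dvd_of_pow_eq_one hone
    have hd2 : orderOf b ∣ 2 ^ (2 * k) - 1 := by
      apply orderOf_dvd_of_pow_eq_one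
      rw [← hcard]
      exact FiniteField.pow_card_sub_one_eq_one b hb0
    set d := orderOf b with hd
    have hdpos : 0 < d := by
      rcases Nat.eq_zero_or_pos d with h0 | h0
      · exfalso
        have h1 : (2:ℕ) ^ (2*k) - 1 ≠ 0 := by
          have : (1:ℕ) < 2 ^ (2*k) := Nat.one_lt_two_pow (by omega); omega
        rw [h0] at hd2
        exact h1 (Nat.eq_zero_of_zero_dvd hd2)
      · exact h0
    haveI : NeZero d := ⟨hdpos.ne'⟩
    have castpow : ∀ m : ℕ, d ∣ 2 ^ m - 1 → (2 : ZMod d) ^ m = 1 := by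
      intro m hm
      have h1 : ((2 ^ m - 1 : ℕ) : ZMod d) = 0 := (ZMod.natCast_eq_zero_iff _ _).mpr hm
      rw [Nat.cast_sub Nat.one_le_two_pow] at h1
      push_cast at h1
      linear_combination h1
    have ho1 : orderOf (2 : ZMod d) ∣ s := orderOf_dvd_of_pow_eq_one (castpow s hd1)
    have ho2 : orderOf (2 : ZMod d) ∣ 2 * k := orderOf_dvd_of_pow_eq_one (castpow (2*k) hd2)
    have ho : orderOf (2 : ZMod d) ∣ 1 := by have := Nat.dvd_gcd ho1 ho2; rwa [hgcd] at this
    have h21 : (2 : ZMod d) = 1 := orderOf_eq_one_iff.mp (Nat.dvd_one.mp ho)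
    have hone' : ((1:ℕ) : ZMod d) = 0 := by push_cast; linear_combination h21
    have hd1' : d ∣ 1 := (ZMod.natCast_eq_zero_iff _ _).mp hone'
    exact hb1 (orderOf_eq_one_iff.mp (Nat.dvd_one.mp hd1'))
  -- now the algebraic identity
  subst hcb
  have hbinv : b⁻¹ + 1 = (b + 1) * b⁻¹ := by field_simp; ring
  have hcinv : b'⁻¹ + 1 = (b' + 1) * b'⁻¹ := by field_simp; ring
  have hsum : b⁻¹ + b'⁻¹ = (b + b') * (b * b')⁻¹ := by field_simp; ring
  have hden2 : ((b + b') * (b * b')⁻¹) ^ (2 ^ s + 1) ≠ 0 := by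
    apply pow_ne_zero
    exact mul_ne_zero hbb' (inv_ne_zero (mul_ne_zero hb0 hb'0))
  rw [hbinv, hcinv, hsum, div_eq_div_iff (pow_ne_zero _ hbb') hden2, mul_pow, mul_pow,
    inv_pow, inv_pow]
  subst hb'
  field_simp
  ring
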